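/- Let p ≥ 1 and let λ₁,…,λ_{p+1} be distinct real numbers. Define the basic spline S : ℝ → ℝ by S(t) = Σ_{j=1}^{p+1} (λ_j − t)_+^{p−1} / ∏_{k≠j}(λ_j − λ_k). Then S(t) ≥ 0 for all t ∈ ℝ, and S(t) = 0 whenever t < min_{1≤k≤p+1} λ_k or t > max_{1≤k≤p+1} λ_k. -/

import Mathlib

open Finset

noncomputable def dd (s : Finset ℝ) (f : ℝ → ℝ) : ℝ :=
  ∑ x ∈ s, f x / ∏ y ∈ s.erase x, (x - y)

lemma dd_congr {s : Finset ℝ} {f g : ℝ → ℝ} (h : ∀ x ∈ s, f x = g x) :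
    dd s f = dd s g :=
  Finset.sum_congr rfl fun x hx => by rw [h x hx]

lemma dd_zero (s : Finset ℝ) : dd s (fun _ => (0:ℝ)) = 0 := by simp [dd]

lemma dd_mul_sub {s : Finset ℝ} {a : ℝ} (ha : a ∈ s) (c : ℝ) (f : ℝ → ℝ) :
    dd s (fun x => (x - c) * f x) = (a - c) * dd s f + dd (s.erase a) f := by
  have key : dd s (fun x => (x - c) * f x) - (a - c) * dd s f = dd (s.erase a) f := by
    unfold dd
    rw [Finset.mul_sum, ← Finset.sum_sub_distrib]
    have h1 : ∀ x ∈ s, (x - c) * f x / ∏ y ∈ s.erase x, (x - y)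
        - (a - c) * (f x / ∏ y ∈ s.erase x, (x - y))
        = (x - a) * f x / ∏ y ∈ s.erase x, (x - y) := fun x _ => by ring
    rw [Finset.sum_congr rfl h1,
      ← Finset.sum_erase (f := fun x => (x - a) * f x / ∏ y ∈ s.erase x, (x - y)) (a := a) s (by simp)]
    refine Finset.sum_congr rfl fun x hx => ?_
    have hxa : x ≠ a := Finset.ne_of_mem_erase hx
    have hxs : x ∈ s := Finset.mem_of_mem_erase hx
    have has : a ∈ s.erase x := Finset.mem_erase.2 ⟨hxa.symm, ha⟩
    rw [← Finset.mul_prod_erase _ _ has, Finset.erase_right_comm,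
      mul_div_mul_left _ _ (sub_ne_zero.2 hxa)]
  linarith

lemma dd_recur {s : Finset ℝ} {a b : ℝ} (ha : a ∈ s) (hb : b ∈ s) (f : ℝ → ℝ) :
    (b - a) * dd s f = dd (s.erase a) f - dd (s.erase b) f := by
  have h1 := dd_mul_sub ha 0 f
  have h2 := dd_mul_sub hb 0 f
  linear_combination h1 - h2

lemma dd_pair {a b : ℝ} (hab : a ≠ b) (f : ℝ → ℝ) :
    dd {a, b} f = f a / (a - b) + f b / (b - a) := by
  unfold dd
  rw [Finset.sum_pair hab]
  have e1 : ({a, b} : Finset ℝ).erase a = {b} := by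
    rw [Finset.erase_insert (by simpa using hab)]
  have e2 : ({a, b} : Finset ℝ).erase b = {a} := by
    rw [Finset.pair_comm, Finset.erase_insert (by simpa using hab.symm)]
  rw [e1, e2, Finset.prod_singleton, Finset.prod_singleton]

lemma dd_one : ∀ (n : ℕ) (s : Finset ℝ), s.card = n + 2 → dd s (fun _ => (1:ℝ)) = 0 := by
  intro n
  induction n with
  | zero =>
    intro s hs
    obtain ⟨a, b, hab, rfl⟩ := Finset.card_eq_two.1 hs
    rw [dd_pair hab]
    have h1 : a - b ≠ 0 := sub_ne_zero.2 hab
    have h2 : b - a ≠ 0 := sub_ne_zero.2 hab.symm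
    field_simp; ring
  | succ n ih =>
    intro s hs
    obtain ⟨a, ha, b, hb, hab⟩ := Finset.one_lt_card.1 (by omega : 1 < s.card)
    have h := dd_recur ha hb (fun _ => (1:ℝ))
    rw [ih (s.erase a) (by rw [Finset.card_erase_of_mem ha]; omega),
      ih (s.erase b) (by rw [Finset.card_erase_of_mem hb]; omega)] at h
    have hba : b - a ≠ 0 := sub_ne_zero.2 hab.symm
    exact (mul_eq_zero.1 (by linarith)).resolve_left hba

lemma dd_pow (t : ℝ) : ∀ (m : ℕ) (s : Finset ℝ), m + 2 ≤ s.card →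
    dd s (fun x => (x - t) ^ m) = 0 := by
  intro m
  induction m with
  | zero =>
    intro s hs
    obtain ⟨n, hn⟩ : ∃ n, s.card = n + 2 := ⟨s.card - 2, by omega⟩
    simpa using dd_one n s hn
  | succ m ih =>
    intro s hs
    obtain ⟨a, ha⟩ : s.Nonempty := Finset.card_pos.1 (by omega)
    have h := dd_mul_sub ha t (fun x => (x - t) ^ m)
    have e : dd s (fun x => (x - t) * (x - t) ^ m) = dd s (fun x => (x - t) ^ (m + 1)) :=
      dd_congr fun x _ => by ring
    rw [e, ih s (by omega), ih (s.erase a) (by rw [Finset.card_erase_of_mem ha]; omega)] at h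
    rw [h]; ring

lemma dd_trunc_nonneg : ∀ (p : ℕ), 1 ≤ p → ∀ (t : ℝ) (s : Finset ℝ), s.card = p + 1 →
    0 ≤ dd s (fun x => if t ≤ x then (x - t) ^ (p - 1) else 0) := by
  intro p hp
  induction p, hp using Nat.le_induction with
  | base =>
    intro t s hs
    obtain ⟨a, b, hab, rfl⟩ := Finset.card_eq_two.1 hs
    rw [dd_pair hab]
    have key : ∀ u v : ℝ, u < v →
        0 ≤ (if t ≤ u then (u - t) ^ (1 - 1) else 0) / (u - v)
          + (if t ≤ v then (v - t) ^ (1 - 1) else 0) / (v - u) := by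
      intro u v huv
      have h1 : u - v ≠ 0 := sub_ne_zero.2 huv.ne
      have h2 : (0:ℝ) < v - u := sub_pos.2 huv
      have heq : (if t ≤ u then (u - t) ^ (1 - 1) else (0:ℝ)) / (u - v)
          + (if t ≤ v then (v - t) ^ (1 - 1) else 0) / (v - u)
          = ((if t ≤ v then (1:ℝ) else 0) - (if t ≤ u then (1:ℝ) else 0)) / (v - u) := by
        simp only [show (1 - 1 : ℕ) = 0 from rfl, pow_zero]
        split_ifs <;> field_simp <;> ring
      rw [heq]
      apply div_nonneg _ h2.le
      split_ifs with hv hu hu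
      · norm_num
      · norm_num
      · exact absurd (hu.trans huv.le) hv
      · norm_num
    rcases lt_or_gt_of_ne hab with h | h
    · exact key a b h
    · have := key b a h
      linarith [this]
  | succ p hp ih =>
    intro t s hs
    have hne : s.Nonempty := Finset.card_pos.1 (by omega)
    set a := s.min' hne with hadef
    set b := s.max' hne with hbdef
    have ha : a ∈ s := s.min'_mem hne
    have hb : b ∈ s := s.max'_mem hne
    have hab : a < b := s.min'_lt_max'_of_card (by omega)
    have hexp : p + 1 - 1 = p := by omega
    rcases le_or_gt t a with hta | hta
    · -- t ≤ min : function agrees with polynomial, divided difference vanishes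
      have : dd s (fun x => if t ≤ x then (x - t) ^ (p + 1 - 1) else 0)
          = dd s (fun x => (x - t) ^ p) := by
        refine dd_congr fun x hx => ?_
        rw [if_pos (hta.trans (s.min'_le x hx)), hexp]
      rw [this, dd_pow t p s (by omega)]
    · rcases le_or_gt t b with htb | htb
      · -- a < t ≤ b : Cox–de Boor recurrence
        set g : ℝ → ℝ := fun x => if t ≤ x then (x - t) ^ (p - 1) else 0 with hg
        have hfg : ∀ x ∈ s, (if t ≤ x then (x - t) ^ (p + 1 - 1) else (0:ℝ))
            = (x - t) * g x := by
          intro x _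
          simp only [hg]
          by_cases h : t ≤ x
          · simp only [if_pos h, hexp]
            rw [← pow_succ']
            congr 1
            omega
          · simp [if_neg h]
        have h1 := dd_mul_sub ha t g
        have h2 := dd_mul_sub hb t g
        have hDa : 0 ≤ dd (s.erase a) g :=
          ih t (s.erase a) (by rw [Finset.card_erase_of_mem ha]; omega)
        have hDb : 0 ≤ dd (s.erase b) g :=
          ih t (s.erase b) (by rw [Finset.card_erase_of_mem hb]; omega)
        rw [dd_congr hfg]
        have hE : (b - a) * dd s g = dd (s.erase a) g - dd (s.erase b) g :=
          dd_recur ha hb g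
        have h3 : (b - a) * dd s (fun x => (x - t) * g x)
            = (b - t) * dd (s.erase a) g + (t - a) * dd (s.erase b) g := by
          linear_combination (b - a) * h2 + (b - t) * hE
        nlinarith [mul_nonneg (sub_nonneg.2 htb) hDa,
          mul_nonneg (sub_nonneg.2 hta.le) hDb, sub_pos.2 hab]
      · -- t > max : all values vanish
        have : dd s (fun x => if t ≤ x then (x - t) ^ (p + 1 - 1) else 0)
            = dd s (fun _ => (0:ℝ)) := by
          refine dd_congr fun x hx => ?_
          rw [if_neg (not_le.2 ((s.le_max' x hx).trans_lt htb))]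
        rw [this, dd_zero]

/-- The basic spline `S(t) = ∑ j (λ_j - t)_+^{p-1} / ∏_{k≠j}(λ_j - λ_k)` (with the
truncated power of exponent `0` being the indicator of `[0,∞)`) is nonnegative and
vanishes outside `[min λ_k, max λ_k]`. -/
theorem stmt10 (p : ℕ) (hp : 1 ≤ p) (l : Fin (p + 1) → ℝ) (hl : Function.Injective l) :
    (∀ t : ℝ, 0 ≤ ∑ j : Fin (p + 1),
        (if 0 ≤ l j - t then (l j - t) ^ (p - 1) else 0) / ∏ k ∈ univ.erase j, (l j - l k))
    ∧ ∀ t : ℝ, (t < univ.inf' univ_nonempty l ∨ univ.sup' univ_nonempty l < t) →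
        ∑ j : Fin (p + 1),
          (if 0 ≤ l j - t then (l j - t) ^ (p - 1) else 0) /
            ∏ k ∈ univ.erase j, (l j - l k) = 0 := by
  classical
  set s : Finset ℝ := Finset.image l univ with hsdef
  have hcard : s.card = p + 1 := by
    rw [hsdef, Finset.card_image_of_injective _ hl, Finset.card_univ, Fintype.card_fin]
  have hne : s.Nonempty := Finset.card_pos.1 (by omega)
  have hsum : ∀ t : ℝ, (∑ j : Fin (p + 1),
      (if 0 ≤ l j - t then (l j - t) ^ (p - 1) else 0) / ∏ k ∈ univ.erase j, (l j - l k))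
      = dd s (fun x => if t ≤ x then (x - t) ^ (p - 1) else 0) := by
    intro t
    rw [hsdef]
    unfold dd
    rw [Finset.sum_image (fun x _ y _ h => hl h)]
    refine Finset.sum_congr rfl fun j _ => ?_
    congr 1
    · show (if 0 ≤ l j - t then (l j - t) ^ (p - 1) else 0)
          = if t ≤ l j then (l j - t) ^ (p - 1) else 0
      rcases le_or_gt t (l j) with h | h
      · rw [if_pos h, if_pos (by linarith : (0:ℝ) ≤ l j - t)]
      · rw [if_neg (not_le.2 h), if_neg (by simp; linarith : ¬ (0:ℝ) ≤ l j - t)]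
    · rw [← Finset.image_erase hl,
        Finset.prod_image (fun x _ y _ h => hl h)]
  have hmin : univ.inf' univ_nonempty l = s.min' hne := (Finset.inf'_image hne id).symm
  have hmax : univ.sup' univ_nonempty l = s.max' hne := (Finset.sup'_image hne id).symm
  constructor
  · intro t
    rw [hsum t]
    exact dd_trunc_nonneg p hp t s hcard
  · intro t ht
    rw [hsum t]
    rcases ht with ht | ht
    · rw [hmin] at ht
      have : dd s (fun x => if t ≤ x then (x - t) ^ (p - 1) else 0)
          = dd s (fun x => (x - t) ^ (p - 1)) := by
        refine dd_congr fun x hx => ?_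
        exact if_pos (ht.le.trans (s.min'_le x hx))
      rw [this, dd_pow t (p - 1) s (by omega)]
    · rw [hmax] at ht
      have : dd s (fun x => if t ≤ x then (x - t) ^ (p - 1) else 0)
          = dd s (fun _ => (0:ℝ)) := by
        refine dd_congr fun x hx => ?_
        exact if_neg (not_le.2 ((s.le_max' x hx).trans_lt ht))
      rw [this, dd_zero]
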